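/- The backward shift B is bounded on H^p(T) if and only if the set {K(1,n)^{p−1}·γ(n+1)/γ(n) : n ≥ 0} is bounded, in which case ‖B‖ = (sup_n K(1,n)^{p−1}γ(n+1)/γ(n))^{1/p}. The same characterization and norm formula hold on H^p_0(T). -/

import Mathlib

open scoped BigOperators
open Classical

/-- An infinite, locally finite rooted tree, presented combinatorially via a
parent function and a level (distance-to-root) function.  Every level is a
finite nonempty set of vertices. -/
structure HTree where
  V : Type
  root : V
  parent : V → V
  level : V → ℕ
  level_root : level root = 0
  root_of_level_zero : ∀ v, level v = 0 → v = root
  level_parent : ∀ v, v ≠ root → level (parent v) + 1 = level v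
  finite_level : ∀ n : ℕ, {v : V | level v = n}.Finite
  nonempty_level : ∀ n : ℕ, {v : V | level v = n}.Nonempty

namespace HTree

variable (T : HTree)

/-- The finite set of vertices at level `n`. -/
noncomputable def levelFinset (n : ℕ) : Finset T.V := (T.finite_level n).toFinset

/-- `γ(n)`, the number of vertices at level `n`. -/
noncomputable def gamma (n : ℕ) : ℕ := (T.levelFinset n).card

/-- The set of `m`-children of a vertex `v`. -/
noncomputable def nChildrenFinset (m : ℕ) (v : T.V) : Finset T.V :=
  (T.levelFinset (T.level v + m)).filter (fun w => T.parent^[m] w = v)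

/-- `γ(m,v)`, the number of `m`-children of `v`. -/
noncomputable def numNChildren (m : ℕ) (v : T.V) : ℕ := (T.nChildrenFinset m v).card

/-- The set of children of a vertex. -/
noncomputable def childrenFinset (v : T.V) : Finset T.V := T.nChildrenFinset 1 v

/-- `γ(1,v)`, the number of children of `v`. -/
noncomputable def numChildren (v : T.V) : ℕ := T.numNChildren 1 v

/-- `K(m,r)`, the maximal number of `m`-children among vertices at level `r`. -/
noncomputable def K (m r : ℕ) : ℕ := (T.levelFinset r).sup (fun v => T.numNChildren m v)

/-- `M_p^p(n,f)`, the `p`-th power of the `p`-th mean of `|f|` over level `n`. -/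
noncomputable def Mpp (p : ℝ) (f : T.V → ℂ) (n : ℕ) : ℝ :=
  (1 / (T.gamma n : ℝ)) * ∑ v ∈ T.levelFinset n, ‖f v‖ ^ p

/-- `M_p(n,f)`, the `p`-th mean of `|f|` over level `n`. -/
noncomputable def Mp (p : ℝ) (f : T.V → ℂ) (n : ℕ) : ℝ := (T.Mpp p f n) ^ (1 / p)

/-- Membership in the Hardy space `H^p(T)`. -/
def MemHp (p : ℝ) (f : T.V → ℂ) : Prop := ∃ C : ℝ, ∀ n : ℕ, T.Mp p f n ≤ C

/-- Membership in the little Hardy space `H^p_0(T)`. -/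
def MemHp0 (p : ℝ) (f : T.V → ℂ) : Prop :=
  Filter.Tendsto (T.Mp p f) Filter.atTop (nhds 0)

/-- The `H^p` norm, `sup_n M_p(n,f)`. -/
noncomputable def Hnorm (p : ℝ) (f : T.V → ℂ) : ℝ := ⨆ n : ℕ, T.Mp p f n

/-- The forward shift `(Sf)(v) = f(parent v)`, `(Sf)(root) = 0`. -/
noncomputable def S (f : T.V → ℂ) : T.V → ℂ := fun v => if v = T.root then 0 else f (T.parent v)

/-- The backward shift `(Bf)(v) = Σ_{w child of v} f(w)`. -/
noncomputable def B (f : T.V → ℂ) : T.V → ℂ := fun v => ∑ w ∈ T.childrenFinset v, f w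

/-- An operator `A` is bounded on the subspace described by `Mem`, with the
`H^p` norm. -/
def BoundedOn (A : (T.V → ℂ) → (T.V → ℂ)) (Mem : (T.V → ℂ) → Prop) (p : ℝ) : Prop :=
  ∃ C : ℝ, 0 ≤ C ∧ ∀ f, Mem f → Mem (A f) ∧ T.Hnorm p (A f) ≤ C * T.Hnorm p f

/-- The operator norm of `A` on the subspace described by `Mem`. -/
noncomputable def opNorm (A : (T.V → ℂ) → (T.V → ℂ)) (Mem : (T.V → ℂ) → Prop) (p : ℝ) : ℝ :=
  sInf {C : ℝ | 0 ≤ C ∧ ∀ f, Mem f → Mem (A f) ∧ T.Hnorm p (A f) ≤ C * T.Hnorm p f}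

/-- Hypercyclicity of an operator `A` on the subspace described by `Mem`. -/
def Hypercyclic (A : (T.V → ℂ) → (T.V → ℂ)) (Mem : (T.V → ℂ) → Prop) (p : ℝ) : Prop :=
  ∃ f, Mem f ∧ ∀ g, Mem g → ∀ ε : ℝ, 0 < ε →
    ∃ N : ℕ, T.Hnorm p (fun v => A^[N] f v - g v) < ε

end HTree

namespace HTree


variable (T : HTree)

lemma mem_levelFinset_iff {v : T.V} {n : ℕ} : v ∈ T.levelFinset n ↔ T.level v = n := by
  simp [levelFinset]

lemma gamma_pos (n : ℕ) : 0 < T.gamma n := by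
  rw [gamma, Finset.card_pos]
  obtain ⟨v, hv⟩ := T.nonempty_level n
  exact ⟨v, T.mem_levelFinset_iff.2 hv⟩

lemma mem_childrenFinset_iff {v w : T.V} :
    w ∈ T.childrenFinset v ↔ T.level w = T.level v + 1 ∧ T.parent w = v := by
  simp [childrenFinset, nChildrenFinset, Finset.mem_filter, mem_levelFinset_iff]

lemma numChildren_eq (v : T.V) : T.numChildren v = (T.childrenFinset v).card := rfl

lemma parent_mem_level {w : T.V} {n : ℕ} (hw : w ∈ T.levelFinset (n + 1)) :
    T.parent w ∈ T.levelFinset n := by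
  have hlw : T.level w = n + 1 := T.mem_levelFinset_iff.1 hw
  have hwr : w ≠ T.root := by
    intro h; rw [h, T.level_root] at hlw; exact Nat.succ_ne_zero n hlw.symm
  have := T.level_parent w hwr
  rw [hlw] at this
  exact T.mem_levelFinset_iff.2 (Nat.succ_injective this)

lemma childrenFinset_eq_filter {v : T.V} {n : ℕ} (hv : v ∈ T.levelFinset n) :
    T.childrenFinset v = (T.levelFinset (n + 1)).filter (fun w => T.parent w = v) := by
  have hlv : T.level v = n := T.mem_levelFinset_iff.1 hv
  ext w
  simp [mem_childrenFinset_iff, Finset.mem_filter, mem_levelFinset_iff, hlv, and_comm]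

lemma sum_level_succ (n : ℕ) (g : T.V → ℝ) :
    ∑ w ∈ T.levelFinset (n + 1), g w
      = ∑ v ∈ T.levelFinset n, ∑ w ∈ T.childrenFinset v, g w := by
  rw [← Finset.sum_fiberwise_of_maps_to (fun w hw => T.parent_mem_level hw) g]
  exact Finset.sum_congr rfl fun v hv => by rw [T.childrenFinset_eq_filter hv]

lemma numChildren_le_K {v : T.V} {n : ℕ} (hv : v ∈ T.levelFinset n) :
    T.numChildren v ≤ T.K 1 n :=
  Finset.le_sup hv

lemma one_le_K (n : ℕ) : 1 ≤ T.K 1 n := by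
  obtain ⟨w, hw⟩ := T.nonempty_level (n + 1)
  have hw' : w ∈ T.levelFinset (n + 1) := T.mem_levelFinset_iff.2 hw
  have hp := T.parent_mem_level hw'
  have hmem : w ∈ T.childrenFinset (T.parent w) := by
    rw [T.childrenFinset_eq_filter hp, Finset.mem_filter]
    exact ⟨hw', rfl⟩
  calc 1 ≤ T.numChildren (T.parent w) := Finset.card_pos.2 ⟨w, hmem⟩
    _ ≤ T.K 1 n := T.numChildren_le_K hp

lemma exists_K_attained (n : ℕ) :
    ∃ v ∈ T.levelFinset n, T.numChildren v = T.K 1 n := by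
  obtain ⟨v, hv⟩ := T.nonempty_level n
  obtain ⟨w, hw, hsup⟩ := Finset.exists_mem_eq_sup (T.levelFinset n)
    ⟨v, T.mem_levelFinset_iff.2 hv⟩ (fun v => T.numNChildren 1 v)
  exact ⟨w, hw, hsup.symm⟩

lemma Mpp_nonneg (p : ℝ) (f : T.V → ℂ) (n : ℕ) : 0 ≤ T.Mpp p f n := by
  unfold Mpp
  have : ∀ v ∈ T.levelFinset n, (0:ℝ) ≤ ‖f v‖ ^ p :=
    fun v _ => Real.rpow_nonneg (norm_nonneg _) p
  positivity

lemma Mp_nonneg (p : ℝ) (f : T.V → ℂ) (n : ℕ) : 0 ≤ T.Mp p f n :=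
  Real.rpow_nonneg (T.Mpp_nonneg p f n) _


lemma norm_sum_rpow_le {α : Type*} (s : Finset α) (f : α → ℂ) {p : ℝ} (hp : 1 ≤ p) :
    ‖∑ w ∈ s, f w‖ ^ p ≤ (s.card : ℝ) ^ (p - 1) * ∑ w ∈ s, ‖f w‖ ^ p := by
  have hp0 : (0:ℝ) < p := lt_of_lt_of_le one_pos hp
  rcases s.eq_empty_or_nonempty with rfl | hs
  · simp [Real.zero_rpow hp0.ne']
  have hcard : (0:ℝ) < s.card := by exact_mod_cast Finset.card_pos.2 hs
  have h1 : ‖∑ w ∈ s, f w‖ ^ p ≤ (∑ w ∈ s, ‖f w‖) ^ p :=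
    Real.rpow_le_rpow (norm_nonneg _) (norm_sum_le s f) hp0.le
  refine h1.trans ?_
  have key := Real.rpow_arith_mean_le_arith_mean_rpow s (fun _ => (s.card : ℝ)⁻¹)
    (fun w => ‖f w‖) (fun _ _ => by positivity)
    (by rw [Finset.sum_const, nsmul_eq_mul, mul_inv_cancel₀ hcard.ne']) (fun _ _ => norm_nonneg _) hp
  have hsum : (∑ w ∈ s, ‖f w‖) = (s.card : ℝ) * ∑ w ∈ s, (s.card : ℝ)⁻¹ * ‖f w‖ := by
    rw [← Finset.mul_sum, ← mul_assoc, mul_inv_cancel₀ hcard.ne', one_mul]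
  rw [hsum, Real.mul_rpow hcard.le (by positivity)]
  calc (s.card : ℝ) ^ p * (∑ w ∈ s, (s.card : ℝ)⁻¹ * ‖f w‖) ^ p
      ≤ (s.card : ℝ) ^ p * ∑ w ∈ s, (s.card : ℝ)⁻¹ * ‖f w‖ ^ p := by
        exact mul_le_mul_of_nonneg_left key (Real.rpow_nonneg hcard.le p)
    _ = (s.card : ℝ) ^ (p - 1) * ∑ w ∈ s, ‖f w‖ ^ p := by
        rw [← Finset.mul_sum, Real.rpow_sub hcard, Real.rpow_one]
        field_simp

variable (T : HTree)

lemma Mpp_B_le {p : ℝ} (hp : 1 ≤ p) (f : T.V → ℂ) (n : ℕ) :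
    T.Mpp p (T.B f) n ≤
      (T.K 1 n : ℝ) ^ (p - 1) * (T.gamma (n + 1) : ℝ) / (T.gamma n : ℝ)
        * T.Mpp p f (n + 1) := by
  have hp0 : (0:ℝ) < p := lt_of_lt_of_le one_pos hp
  have hγn : (0:ℝ) < T.gamma n := by exact_mod_cast T.gamma_pos n
  have hγn1 : (0:ℝ) < T.gamma (n + 1) := by exact_mod_cast T.gamma_pos (n + 1)
  have hA : (0:ℝ) ≤ ∑ w ∈ T.levelFinset (n + 1), ‖f w‖ ^ p :=
    Finset.sum_nonneg fun w _ => Real.rpow_nonneg (norm_nonneg _) p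
  have step : ∑ v ∈ T.levelFinset n, ‖T.B f v‖ ^ p
      ≤ (T.K 1 n : ℝ) ^ (p - 1) * ∑ w ∈ T.levelFinset (n + 1), ‖f w‖ ^ p := by
    rw [T.sum_level_succ n (fun w => ‖f w‖ ^ p), Finset.mul_sum]
    apply Finset.sum_le_sum
    intro v hv
    refine (norm_sum_rpow_le (T.childrenFinset v) f hp).trans ?_
    apply mul_le_mul_of_nonneg_right _ (Finset.sum_nonneg fun w _ =>
      Real.rpow_nonneg (norm_nonneg _) p)
    apply Real.rpow_le_rpow (Nat.cast_nonneg _) _ (by linarith)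
    exact_mod_cast (T.numChildren_eq v ▸ T.numChildren_le_K hv : T.numChildren v ≤ T.K 1 n)
  have hR : (T.K 1 n : ℝ) ^ (p - 1) * (T.gamma (n + 1) : ℝ) / (T.gamma n : ℝ)
        * ((1 / (T.gamma (n + 1) : ℝ)) * ∑ w ∈ T.levelFinset (n + 1), ‖f w‖ ^ p)
      = (1 / (T.gamma n : ℝ)) *
        ((T.K 1 n : ℝ) ^ (p - 1) * ∑ w ∈ T.levelFinset (n + 1), ‖f w‖ ^ p) := by
    field_simp
  show (1 / (T.gamma n : ℝ)) * ∑ v ∈ T.levelFinset n, ‖T.B f v‖ ^ p ≤ _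
  rw [Mpp, hR]
  exact mul_le_mul_of_nonneg_left step (by positivity)

lemma Mp_B_le {p : ℝ} (hp : 1 ≤ p) (f : T.V → ℂ) (n : ℕ) :
    T.Mp p (T.B f) n ≤
      ((T.K 1 n : ℝ) ^ (p - 1) * (T.gamma (n + 1) : ℝ) / (T.gamma n : ℝ)) ^ (1 / p)
        * T.Mp p f (n + 1) := by
  have hφ : (0:ℝ) ≤ (T.K 1 n : ℝ) ^ (p - 1) * (T.gamma (n + 1) : ℝ) / (T.gamma n : ℝ) := by
    have : (0:ℝ) ≤ (T.K 1 n : ℝ) ^ (p - 1) := Real.rpow_nonneg (Nat.cast_nonneg _) _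
    positivity
  have h := Real.rpow_le_rpow (T.Mpp_nonneg p (T.B f) n) (T.Mpp_B_le hp f n)
    (by positivity : (0:ℝ) ≤ 1 / p)
  rwa [Real.mul_rpow hφ (T.Mpp_nonneg p f (n + 1))] at h

lemma ciSup_eq_single (g : ℕ → ℝ) (n : ℕ) (h0 : ∀ m, m ≠ n → g m = 0) (hn : 0 ≤ g n) :
    (⨆ m, g m) = g n := by
  have hb : ∀ m, g m ≤ g n := by
    intro m
    by_cases hm : m = n
    · rw [hm]
    · rw [h0 m hm]; exact hn
  exact le_antisymm (ciSup_le hb) (le_ciSup ⟨g n, by rintro x ⟨m, rfl⟩; exact hb m⟩ n)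

/-- The witness function: indicator of the children of `v0`. -/
noncomputable def wit (T : HTree) (v0 : T.V) : T.V → ℂ :=
  fun w => if w ∈ T.childrenFinset v0 then 1 else 0

variable (T : HTree)

lemma B_wit (v0 v : T.V) :
    T.B (T.wit v0) v = if v = v0 then (T.numChildren v0 : ℂ) else 0 := by
  unfold B wit
  split_ifs with h
  · subst h
    rw [Finset.sum_congr rfl (fun w hw => if_pos hw), Finset.sum_const, nsmul_eq_mul,
      mul_one, numChildren_eq]
  · apply Finset.sum_eq_zero
    intro w hw
    rw [if_neg]
    intro hmem
    exact h (((T.mem_childrenFinset_iff.1 hw).2).symm.trans (T.mem_childrenFinset_iff.1 hmem).2)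

lemma Mp_wit_ne {p : ℝ} (hp : 1 ≤ p) (v0 : T.V) {m : ℕ} (hm : m ≠ T.level v0 + 1) :
    T.Mp p (T.wit v0) m = 0 := by
  have hp0 : (0:ℝ) < p := lt_of_lt_of_le one_pos hp
  have hs : ∑ w ∈ T.levelFinset m, ‖T.wit v0 w‖ ^ p = 0 := by
    apply Finset.sum_eq_zero
    intro w hw
    have : T.wit v0 w = 0 := by
      unfold wit
      rw [if_neg]
      intro hmem
      exact hm (((T.mem_levelFinset_iff.1 hw).symm).trans (T.mem_childrenFinset_iff.1 hmem).1)
    rw [this, norm_zero, Real.zero_rpow hp0.ne']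
  rw [Mp, Mpp, hs, mul_zero, Real.zero_rpow (by positivity : (1:ℝ)/p ≠ 0)]
  -- note: 1/p ≠ 0 since p > 0
  
lemma Mp_wit_eq {p : ℝ} (hp : 1 ≤ p) (v0 : T.V) :
    T.Mp p (T.wit v0) (T.level v0 + 1)
      = ((T.numChildren v0 : ℝ) / (T.gamma (T.level v0 + 1) : ℝ)) ^ (1 / p) := by
  have hp0 : (0:ℝ) < p := lt_of_lt_of_le one_pos hp
  have hsub : T.childrenFinset v0 ⊆ T.levelFinset (T.level v0 + 1) := by
    intro w hw
    exact T.mem_levelFinset_iff.2 (T.mem_childrenFinset_iff.1 hw).1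
  have hs : ∑ w ∈ T.levelFinset (T.level v0 + 1), ‖T.wit v0 w‖ ^ p
      = (T.numChildren v0 : ℝ) := by
    have hpt : ∀ w, ‖T.wit v0 w‖ ^ p
        = if w ∈ T.childrenFinset v0 then (1:ℝ) else 0 := by
      intro w
      unfold wit
      split_ifs with h <;>
        simp [Real.one_rpow, Real.zero_rpow hp0.ne']
    calc ∑ w ∈ T.levelFinset (T.level v0 + 1), ‖T.wit v0 w‖ ^ p
        = ∑ w ∈ T.levelFinset (T.level v0 + 1),
            (if w ∈ T.childrenFinset v0 then (1:ℝ) else 0) :=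
          Finset.sum_congr rfl fun w _ => hpt w
      _ = ∑ w ∈ (T.levelFinset (T.level v0 + 1)).filter (· ∈ T.childrenFinset v0), (1:ℝ) :=
          (Finset.sum_filter _ _).symm
      _ = (T.numChildren v0 : ℝ) := by
          rw [Finset.filter_mem_eq_inter, Finset.inter_eq_right.2 hsub, Finset.sum_const,
            nsmul_eq_mul, mul_one, numChildren_eq]
  rw [Mp, Mpp, hs, one_div_mul_eq_div]

lemma Mp_B_wit_ne {p : ℝ} (hp : 1 ≤ p) (v0 : T.V) {m : ℕ} (hm : m ≠ T.level v0) :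
    T.Mp p (T.B (T.wit v0)) m = 0 := by
  have hp0 : (0:ℝ) < p := lt_of_lt_of_le one_pos hp
  have hs : ∑ v ∈ T.levelFinset m, ‖T.B (T.wit v0) v‖ ^ p = 0 := by
    apply Finset.sum_eq_zero
    intro v hv
    have hne : v ≠ v0 := by
      intro h
      subst h
      exact hm (T.mem_levelFinset_iff.1 hv).symm
    rw [T.B_wit v0 v, if_neg hne, norm_zero, Real.zero_rpow hp0.ne']
  rw [Mp, Mpp, hs, mul_zero, Real.zero_rpow (by positivity : (1:ℝ)/p ≠ 0)]

lemma Mp_B_wit_eq {p : ℝ} (hp : 1 ≤ p) (v0 : T.V) :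
    T.Mp p (T.B (T.wit v0)) (T.level v0)
      = ((T.numChildren v0 : ℝ) ^ p / (T.gamma (T.level v0) : ℝ)) ^ (1 / p) := by
  have hp0 : (0:ℝ) < p := lt_of_lt_of_le one_pos hp
  have hv0 : v0 ∈ T.levelFinset (T.level v0) := T.mem_levelFinset_iff.2 rfl
  have hs : ∑ v ∈ T.levelFinset (T.level v0), ‖T.B (T.wit v0) v‖ ^ p
      = (T.numChildren v0 : ℝ) ^ p := by
    have hpt : ∀ v, ‖T.B (T.wit v0) v‖ ^ p
        = if v = v0 then (T.numChildren v0 : ℝ) ^ p else 0 := by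
      intro v
      rw [T.B_wit v0 v]
      split_ifs with h
      · rw [Complex.norm_natCast]
      · rw [norm_zero, Real.zero_rpow hp0.ne']
    rw [Finset.sum_congr rfl fun v _ => hpt v, Finset.sum_ite_eq' _ v0
      (fun _ => (T.numChildren v0 : ℝ) ^ p), if_pos hv0]
  rw [Mp, Mpp, hs, one_div_mul_eq_div]

lemma Hnorm_wit {p : ℝ} (hp : 1 ≤ p) (v0 : T.V) :
    T.Hnorm p (T.wit v0)
      = ((T.numChildren v0 : ℝ) / (T.gamma (T.level v0 + 1) : ℝ)) ^ (1 / p) := by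
  unfold Hnorm
  rw [ciSup_eq_single _ (T.level v0 + 1) (fun m hm => T.Mp_wit_ne hp v0 hm)
    (T.Mp_nonneg p _ _), T.Mp_wit_eq hp]

lemma Hnorm_B_wit {p : ℝ} (hp : 1 ≤ p) (v0 : T.V) :
    T.Hnorm p (T.B (T.wit v0))
      = ((T.numChildren v0 : ℝ) ^ p / (T.gamma (T.level v0) : ℝ)) ^ (1 / p) := by
  unfold Hnorm
  rw [ciSup_eq_single _ (T.level v0) (fun m hm => T.Mp_B_wit_ne hp v0 hm)
    (T.Mp_nonneg p _ _), T.Mp_B_wit_eq hp]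

lemma memHp_wit {p : ℝ} (hp : 1 ≤ p) (v0 : T.V) : T.MemHp p (T.wit v0) := by
  refine ⟨((T.numChildren v0 : ℝ) / (T.gamma (T.level v0 + 1) : ℝ)) ^ (1 / p), ?_⟩
  intro m
  by_cases hm : m = T.level v0 + 1
  · rw [hm, T.Mp_wit_eq hp]
  · rw [T.Mp_wit_ne hp v0 hm]
    exact Real.rpow_nonneg (by positivity) _

lemma memHp0_wit {p : ℝ} (hp : 1 ≤ p) (v0 : T.V) : T.MemHp0 p (T.wit v0) := by
  apply tendsto_atTop_of_eventually_const (i₀ := T.level v0 + 2)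
  intro m hm
  exact T.Mp_wit_ne hp v0 (by omega)

lemma phi_le_pow {p C : ℝ} (hp : 1 ≤ p) (hC : 0 ≤ C)
    (h : ∀ v0 : T.V, T.Hnorm p (T.B (T.wit v0)) ≤ C * T.Hnorm p (T.wit v0)) (n : ℕ) :
    (T.K 1 n : ℝ) ^ (p - 1) * (T.gamma (n + 1) : ℝ) / (T.gamma n : ℝ) ≤ C ^ p := by
  have hp0 : (0:ℝ) < p := lt_of_lt_of_le one_pos hp
  obtain ⟨v0, hv0, hk⟩ := T.exists_K_attained n
  have hlv : T.level v0 = n := T.mem_levelFinset_iff.1 hv0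
  have hkpos : (0:ℝ) < (T.K 1 n : ℝ) := by exact_mod_cast T.one_le_K n
  have hγ0 : (0:ℝ) < (T.gamma n : ℝ) := by exact_mod_cast T.gamma_pos n
  have hγ1 : (0:ℝ) < (T.gamma (n + 1) : ℝ) := by exact_mod_cast T.gamma_pos (n + 1)
  have h1 : ((T.K 1 n : ℝ) ^ p / (T.gamma n : ℝ)) ^ (1 / p)
      ≤ C * ((T.K 1 n : ℝ) / (T.gamma (n + 1) : ℝ)) ^ (1 / p) := by
    have := h v0
    rwa [T.Hnorm_B_wit hp v0, T.Hnorm_wit hp v0, hlv, hk] at this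
  have hb1 : (0:ℝ) ≤ (T.K 1 n : ℝ) ^ p / (T.gamma n : ℝ) := by positivity
  have hb2 : (0:ℝ) ≤ (T.K 1 n : ℝ) / (T.gamma (n + 1) : ℝ) := by positivity
  have h2 := Real.rpow_le_rpow (Real.rpow_nonneg hb1 _) h1 hp0.le
  rw [Real.mul_rpow hC (Real.rpow_nonneg hb2 _), ← Real.rpow_mul hb1,
    one_div_mul_cancel hp0.ne', Real.rpow_one, ← Real.rpow_mul hb2,
    one_div_mul_cancel hp0.ne', Real.rpow_one] at h2
  have hkey : (T.K 1 n : ℝ) ^ (p - 1) * (T.gamma (n + 1) : ℝ) / (T.gamma n : ℝ)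
      = ((T.K 1 n : ℝ) ^ p / (T.gamma n : ℝ)) / ((T.K 1 n : ℝ) / (T.gamma (n + 1) : ℝ)) := by
    rw [Real.rpow_sub hkpos, Real.rpow_one]
    field_simp
  rw [hkey, div_le_iff₀ (by positivity)]
  exact h2

lemma Mp_B_le_sup {p : ℝ} (hp : 1 ≤ p)
    (hbdd : BddAbove (Set.range fun n : ℕ =>
      (T.K 1 n : ℝ) ^ (p - 1) * (T.gamma (n + 1) : ℝ) / (T.gamma n : ℝ)))
    (f : T.V → ℂ) (n : ℕ) :
    T.Mp p (T.B f) n ≤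
      (⨆ n : ℕ, (T.K 1 n : ℝ) ^ (p - 1) * (T.gamma (n + 1) : ℝ) / (T.gamma n : ℝ)) ^ (1 / p)
        * T.Mp p f (n + 1) := by
  have hφ0 : ∀ m : ℕ, (0:ℝ) ≤ (T.K 1 m : ℝ) ^ (p - 1) * (T.gamma (m + 1) : ℝ) / (T.gamma m : ℝ) := by
    intro m
    have : (0:ℝ) ≤ (T.K 1 m : ℝ) ^ (p - 1) := Real.rpow_nonneg (Nat.cast_nonneg _) _
    positivity
  refine (T.Mp_B_le hp f n).trans ?_
  apply mul_le_mul_of_nonneg_right _ (T.Mp_nonneg p f (n + 1))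
  exact Real.rpow_le_rpow (hφ0 n) (le_ciSup hbdd n) (by positivity)

lemma master {p : ℝ} (hp : 1 ≤ p) (Mem : (T.V → ℂ) → Prop)
    (hwit : ∀ v0 : T.V, Mem (T.wit v0))
    (hrange : ∀ f, Mem f → BddAbove (Set.range (T.Mp p f)))
    (hclosed : BddAbove (Set.range fun n : ℕ =>
        (T.K 1 n : ℝ) ^ (p - 1) * (T.gamma (n + 1) : ℝ) / (T.gamma n : ℝ)) →
      ∀ f, Mem f → Mem (T.B f)) :
    (T.BoundedOn T.B Mem p ↔ BddAbove (Set.range fun n : ℕ =>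
        (T.K 1 n : ℝ) ^ (p - 1) * (T.gamma (n + 1) : ℝ) / (T.gamma n : ℝ))) ∧
    (T.BoundedOn T.B Mem p → T.opNorm T.B Mem p =
      (⨆ n : ℕ, (T.K 1 n : ℝ) ^ (p - 1) * (T.gamma (n + 1) : ℝ) / (T.gamma n : ℝ)) ^ (1 / p)) := by
  have hp0 : (0:ℝ) < p := lt_of_lt_of_le one_pos hp
  set φ : ℕ → ℝ := fun n =>
    (T.K 1 n : ℝ) ^ (p - 1) * (T.gamma (n + 1) : ℝ) / (T.gamma n : ℝ) with hφdef
  have hφ0 : ∀ n, 0 ≤ φ n := by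
    intro n
    have : (0:ℝ) ≤ (T.K 1 n : ℝ) ^ (p - 1) := Real.rpow_nonneg (Nat.cast_nonneg _) _
    simp only [hφdef]
    positivity
  have hM0 : BddAbove (Set.range φ) → 0 ≤ ⨆ n, φ n := fun hbdd =>
    le_trans (hφ0 0) (le_ciSup hbdd 0)
  have hnec : T.BoundedOn T.B Mem p → BddAbove (Set.range φ) := by
    rintro ⟨C, hC, hbd⟩
    refine ⟨C ^ p, ?_⟩
    rintro x ⟨n, rfl⟩
    exact T.phi_le_pow hp hC (fun v0 => (hbd _ (hwit v0)).2) n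
  have hbound : ∀ (_ : BddAbove (Set.range φ)) f, Mem f →
      Mem (T.B f) ∧ T.Hnorm p (T.B f) ≤ (⨆ n, φ n) ^ (1 / p) * T.Hnorm p f := by
    intro hbdd f hf
    refine ⟨hclosed hbdd f hf, ?_⟩
    show (⨆ n, T.Mp p (T.B f) n) ≤ _
    apply ciSup_le
    intro n
    refine (T.Mp_B_le_sup hp hbdd f n).trans ?_
    apply mul_le_mul_of_nonneg_left _ (Real.rpow_nonneg (hM0 hbdd) _)
    exact le_ciSup (hrange f hf) (n + 1)
  constructor
  · constructor
    · exact hnec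
    · intro hbdd
      exact ⟨(⨆ n, φ n) ^ (1 / p), Real.rpow_nonneg (hM0 hbdd) _, hbound hbdd⟩
  · intro hb
    have hbdd := hnec hb
    have hmem : (⨆ n, φ n) ^ (1 / p) ∈ {C : ℝ | 0 ≤ C ∧ ∀ f, Mem f →
        Mem (T.B f) ∧ T.Hnorm p (T.B f) ≤ C * T.Hnorm p f} :=
      ⟨Real.rpow_nonneg (hM0 hbdd) _, hbound hbdd⟩
    have hlb : ∀ C ∈ {C : ℝ | 0 ≤ C ∧ ∀ f, Mem f →
        Mem (T.B f) ∧ T.Hnorm p (T.B f) ≤ C * T.Hnorm p f},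
        (⨆ n, φ n) ^ (1 / p) ≤ C := by
      rintro C ⟨hC0, hCb⟩
      have h1 : (⨆ n, φ n) ≤ C ^ p :=
        ciSup_le fun n => T.phi_le_pow hp hC0 (fun v0 => (hCb _ (hwit v0)).2) n
      have h2 := Real.rpow_le_rpow (hM0 hbdd) h1 (by positivity : (0:ℝ) ≤ 1 / p)
      rwa [← Real.rpow_mul hC0, mul_one_div_cancel hp0.ne', Real.rpow_one] at h2
    exact le_antisymm (csInf_le ⟨_, fun x hx => hlb x hx⟩ hmem) (le_csInf ⟨_, hmem⟩ hlb)
end HTree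

/-- boundedness and norm of the backward shift on `H^p(T)` and `H^p_0(T)`. -/
theorem backward_shift_bounded (T : HTree) (p : ℝ) (hp : 1 ≤ p) :
    (T.BoundedOn T.B (T.MemHp p) p ↔
      BddAbove (Set.range fun n : ℕ =>
        (T.K 1 n : ℝ) ^ (p - 1) * (T.gamma (n + 1) : ℝ) / (T.gamma n : ℝ))) ∧
    (T.BoundedOn T.B (T.MemHp p) p →
      T.opNorm T.B (T.MemHp p) p =
        (⨆ n : ℕ, (T.K 1 n : ℝ) ^ (p - 1) * (T.gamma (n + 1) : ℝ) / (T.gamma n : ℝ))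
          ^ (1 / p)) ∧
    (T.BoundedOn T.B (T.MemHp0 p) p ↔
      BddAbove (Set.range fun n : ℕ =>
        (T.K 1 n : ℝ) ^ (p - 1) * (T.gamma (n + 1) : ℝ) / (T.gamma n : ℝ))) ∧
    (T.BoundedOn T.B (T.MemHp0 p) p →
      T.opNorm T.B (T.MemHp0 p) p =
        (⨆ n : ℕ, (T.K 1 n : ℝ) ^ (p - 1) * (T.gamma (n + 1) : ℝ) / (T.gamma n : ℝ))
          ^ (1 / p)) := by
  have hM0 : BddAbove (Set.range fun n : ℕ =>
        (T.K 1 n : ℝ) ^ (p - 1) * (T.gamma (n + 1) : ℝ) / (T.gamma n : ℝ)) →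
      (0:ℝ) ≤ ⨆ n : ℕ, (T.K 1 n : ℝ) ^ (p - 1) * (T.gamma (n + 1) : ℝ) / (T.gamma n : ℝ) := by
    intro hbdd
    refine le_trans ?_ (le_ciSup hbdd 0)
    have : (0:ℝ) ≤ (T.K 1 0 : ℝ) ^ (p - 1) := Real.rpow_nonneg (Nat.cast_nonneg _) _
    positivity
  have h1 := T.master hp (T.MemHp p) (fun v0 => T.memHp_wit hp v0)
    (fun f hf => by
      obtain ⟨C, hC⟩ := hf
      exact ⟨C, by rintro x ⟨n, rfl⟩; exact hC n⟩)
    (by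
      intro hbdd f hf
      obtain ⟨C, hC⟩ := hf
      refine ⟨(⨆ n : ℕ, (T.K 1 n : ℝ) ^ (p - 1) * (T.gamma (n + 1) : ℝ) / (T.gamma n : ℝ))
        ^ (1 / p) * C, ?_⟩
      intro n
      refine (T.Mp_B_le_sup hp hbdd f n).trans ?_
      exact mul_le_mul_of_nonneg_left (hC (n + 1)) (Real.rpow_nonneg (hM0 hbdd) _))
  have h2 := T.master hp (T.MemHp0 p) (fun v0 => T.memHp0_wit hp v0)
    (fun f hf => hf.bddAbove_range)
    (by
      intro hbdd f hf
      have htend : Filter.Tendsto (fun n : ℕ =>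
          (⨆ n : ℕ, (T.K 1 n : ℝ) ^ (p - 1) * (T.gamma (n + 1) : ℝ) / (T.gamma n : ℝ))
            ^ (1 / p) * T.Mp p f (n + 1)) Filter.atTop (nhds 0) := by
        have := (hf.comp (Filter.tendsto_add_atTop_nat 1)).const_mul
          ((⨆ n : ℕ, (T.K 1 n : ℝ) ^ (p - 1) * (T.gamma (n + 1) : ℝ) / (T.gamma n : ℝ))
            ^ (1 / p))
        simpa [Function.comp] using this
      exact squeeze_zero (fun n => T.Mp_nonneg p _ n)
        (fun n => T.Mp_B_le_sup hp hbdd f n) htend)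
  exact ⟨h1.1, h1.2, h2.1, h2.2⟩
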